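/- For every real constant C, the function y(x) = (−(10/9)·ln(x+4) − 4/(x+4) + (1/9)·(x−5)·ln(x−5)/(x+4) + C)·(x+4) is differentiable on the interval (5, ∞) and satisfies y'(x) = (x − y(x) − ln(x−5))/(−x−4) for all x > 5. -/

import Mathlib

/-- The candidate solution
`y(x) = (−(10/9)·ln(x+4) − 4/(x+4) + (1/9)·(x−5)·ln(x−5)/(x+4) + C)·(x+4)`. -/
noncomputable def ySol (C : ℝ) : ℝ → ℝ := fun x =>
  (-(10 / 9) * Real.log (x + 4) - 4 / (x + 4)
      + (1 / 9) * (x - 5) * Real.log (x - 5) / (x + 4) + C) * (x + 4)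

/-- For every constant `C`, `ySol C` is differentiable on `(5, ∞)` and solves
`y' = (x − y − ln(x−5))/(−x−4)` there. -/
theorem ySol_solves_1ode (C : ℝ) :
    ∀ x : ℝ, 5 < x →
      HasDerivAt (ySol C)
        ((x - ySol C x - Real.log (x - 5)) / (-x - 4)) x := by
  intro x hx
  have h4 : x + 4 ≠ 0 := by linarith
  have h5 : x - 5 ≠ 0 := by linarith
  have hne : -x - 4 ≠ 0 := by linarith
  set g : ℝ → ℝ := fun x =>
    -(10 / 9) * ((x + 4) * Real.log (x + 4)) - 4
      + (1 / 9) * ((x - 5) * Real.log (x - 5)) + C * (x + 4) with hg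
  set D : ℝ := -(10 / 9) * (1 * Real.log (x + 4) + (x + 4) * (1 / (x + 4)))
      + (1 / 9) * (1 * Real.log (x - 5) + (x - 5) * (1 / (x - 5))) + C * 1 with hD
  have hgderiv : HasDerivAt g D x := by
    have h1 : HasDerivAt (fun x : ℝ => x + 4) 1 x := (hasDerivAt_id x).add_const 4
    have h2 : HasDerivAt (fun x : ℝ => x - 5) 1 x := (hasDerivAt_id x).sub_const 5
    have hl1 : HasDerivAt (fun x : ℝ => Real.log (x + 4)) (1 / (x + 4)) x := h1.log h4
    have hl2 : HasDerivAt (fun x : ℝ => Real.log (x - 5)) (1 / (x - 5)) x := h2.log h5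
    exact ((((h1.mul hl1).const_mul (-(10 / 9) : ℝ)).sub_const 4).add
        ((h2.mul hl2).const_mul ((1 : ℝ) / 9))).add (h1.const_mul C)
  have heq : ySol C =ᶠ[nhds x] g := by
    have hxmem : {y : ℝ | 5 < y} ∈ nhds x :=
      (isOpen_lt continuous_const continuous_id).mem_nhds hx
    filter_upwards [hxmem] with y hy
    have hy' : (5 : ℝ) < y := hy
    have h4' : y + 4 ≠ 0 := by linarith
    simp only [ySol, hg]
    field_simp
  have hval : ySol C x = g x := heq.self_of_nhds
  have hmain : HasDerivAt (ySol C) D x := hgderiv.congr_of_eventuallyEq heq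
  have hrhs : (x - ySol C x - Real.log (x - 5)) / (-x - 4) = D := by
    rw [hval]
    simp only [hg, hD]
    field_simp
    ring
  rw [hrhs]
  exact hmain
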